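/- Let F, G be ultrafilters on the positive natural numbers, B ⊆ P a set of primes, and A = B↑ the upward closure of B under divisibility. If A ∈ D(F·G), then A ∈ D(F) or A ∈ D(G). -/

import Mathlib

/-- A set of positive naturals is upward closed under divisibility. -/
def upClosed (A : Set ℕ+) : Prop := ∀ a ∈ A, ∀ n : ℕ+, a ∣ n → n ∈ A

/-- The divisibility relation `∼∣` on ultrafilters: `F ∩ U ⊆ G`. -/
def sdvd (F G : Ultrafilter ℕ+) : Prop := ∀ A : Set ℕ+, A ∈ F → upClosed A → A ∈ G

/-- The product ultrafilter: `A ∈ F·G ↔ {n | {m | m*n ∈ A} ∈ G} ∈ F`. -/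
def mulUF (F G : Ultrafilter ℕ+) : Ultrafilter ℕ+ :=
  F.bind (fun n => G.map (fun m => m * n))

/-- `D(F) = {A | {n | nℕ₊ ⊆ A} ∈ F}`. -/
def DF (F : Ultrafilter ℕ+) : Set (Set ℕ+) :=
  {A | {n : ℕ+ | ∀ m : ℕ+, n * m ∈ A} ∈ F}

/-- A strong antichain: pairwise coprime elements. -/
def strongAntichain (X : Set ℕ+) : Prop :=
  X.Pairwise (fun a b => Nat.Coprime (a : ℕ) (b : ℕ))

/-- An N-free ultrafilter contains no `nℕ₊` with `n ≠ 1`. -/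
def NfreeUF (F : Ultrafilter ℕ+) : Prop :=
  ∀ n : ℕ+, n ≠ 1 → {m : ℕ+ | n ∣ m} ∉ F

/-- for B ⊆ P and A = B↑, A ∈ D(F·G) implies A ∈ D(F) or A ∈ D(G). -/
theorem DF_mul_primes (F G : Ultrafilter ℕ+) (B : Set ℕ+)
    (hB : ∀ p ∈ B, (p : ℕ).Prime)
    (A : Set ℕ+) (hA : A = {n : ℕ+ | ∃ b ∈ B, b ∣ n})
    (h : A ∈ DF (mulUF F G)) : A ∈ DF F ∨ A ∈ DF G := by
  subst hA
  set A : Set ℕ+ := {n : ℕ+ | ∃ b ∈ B, b ∣ n} with hA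
  -- the key set equality
  have key : {n : ℕ+ | ∀ m : ℕ+, n * m ∈ A} = A := by
    ext n
    constructor
    · intro hn
      have := hn 1
      simpa using this
    · rintro ⟨b, hb, hbn⟩ m
      exact ⟨b, hb, hbn.trans (Dvd.intro m rfl)⟩
  have hmul : ∀ m n : ℕ+, (m * n ∈ A) ↔ (m ∈ A ∨ n ∈ A) := by
    intro m n
    constructor
    · rintro ⟨b, hb, hbd⟩
      have hbd' : (b : ℕ) ∣ (m : ℕ) * (n : ℕ) := by
        exact_mod_cast (PNat.dvd_iff.mp hbd)
      rcases (hB b hb).dvd_mul.mp hbd' with hc | hc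
      · exact Or.inl ⟨b, hb, PNat.dvd_iff.mpr hc⟩
      · exact Or.inr ⟨b, hb, PNat.dvd_iff.mpr hc⟩
    · rintro (⟨b, hb, hbd⟩ | ⟨b, hb, hbd⟩)
      · exact ⟨b, hb, hbd.trans (dvd_mul_right m n)⟩
      · exact ⟨b, hb, hbd.trans (dvd_mul_left n m)⟩
  rw [DF, Set.mem_setOf_eq, key] at h
  rw [DF, DF, Set.mem_setOf_eq, Set.mem_setOf_eq, key]
  -- unfold mulUF membership
  have h' : {n : ℕ+ | {m : ℕ+ | m * n ∈ A} ∈ G} ∈ F := by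
    exact h
  by_cases hG : A ∈ G
  · right; exact hG
  · left
    have : {n : ℕ+ | {m : ℕ+ | m * n ∈ A} ∈ G} = A := by
      ext n
      simp only [Set.mem_setOf_eq]
      constructor
      · intro hn
        by_contra hnA
        have : {m : ℕ+ | m * n ∈ A} = A := by
          ext m; simp [hmul, hnA]
        rw [this] at hn
        exact hG hn
      · intro hn
        have : {m : ℕ+ | m * n ∈ A} = Set.univ := by
          ext m; simp [hmul, hn]
        rw [this]
        exact Filter.univ_mem
    rwa [this] at h'
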